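/- Let e be a finite set with positive weights γ and a, b > 0. Consider the directed graph on vertex set e ∪ {v_e} with, for each v ∈ e, a directed edge of weight a·γ(v) from v to v_e and a directed edge of weight b·γ(v) from v_e to v. Then for every S ⊆ e, the minimum over T with T ∩ e = S of the directed cut weight equals min{a·γ(S), b·γ(e \ S)}. -/

import Mathlib

theorem stmt8 {V : Type*} [DecidableEq V] (e : Finset V) (γ : V → ℝ)
    (hγ : ∀ v ∈ e, 0 < γ v) (a b : ℝ) (ha : 0 < a) (hb : 0 < b)
    (u : V) (hu : u ∉ e) :
    ∀ S ⊆ e,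
      IsLeast
        {x : ℝ | ∃ T : Finset V, T ⊆ insert u e ∧ T ∩ e = S ∧
          x = ∑ v ∈ e, ((if v ∈ T ∧ u ∉ T then a * γ v else 0) +
                (if u ∈ T ∧ v ∉ T then b * γ v else 0))}
        (min (a * ∑ v ∈ S, γ v) (b * ∑ v ∈ e \ S, γ v)) := by
  intro S hS
  have huS : u ∉ S := fun h => hu (hS h)
  -- value for T with u ∉ T, T ∩ e = S
  have keyA : ∀ T : Finset V, u ∉ T → (∀ v ∈ e, (v ∈ T ↔ v ∈ S)) →
      ∑ v ∈ e, ((if v ∈ T ∧ u ∉ T then a * γ v else 0) +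
          (if u ∈ T ∧ v ∉ T then b * γ v else 0)) = a * ∑ v ∈ S, γ v := by
    intro T huT hv
    have : ∑ v ∈ e, ((if v ∈ T ∧ u ∉ T then a * γ v else 0) +
          (if u ∈ T ∧ v ∉ T then b * γ v else 0))
        = ∑ v ∈ e, (if v ∈ S then a * γ v else 0) := by
      refine Finset.sum_congr rfl fun v hve => ?_
      simp [hv v hve, huT]
    rw [this, Finset.sum_ite_mem, Finset.inter_eq_right.mpr hS, Finset.mul_sum]
  have keyB : ∀ T : Finset V, u ∈ T → (∀ v ∈ e, (v ∈ T ↔ v ∈ S)) →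
      ∑ v ∈ e, ((if v ∈ T ∧ u ∉ T then a * γ v else 0) +
          (if u ∈ T ∧ v ∉ T then b * γ v else 0)) = b * ∑ v ∈ e \ S, γ v := by
    intro T huT hv
    have : ∑ v ∈ e, ((if v ∈ T ∧ u ∉ T then a * γ v else 0) +
          (if u ∈ T ∧ v ∉ T then b * γ v else 0))
        = ∑ v ∈ e, (if v ∈ e \ S then b * γ v else 0) := by
      refine Finset.sum_congr rfl fun v hve => ?_
      simp [hv v hve, huT, Finset.mem_sdiff, hve]
    rw [this, Finset.sum_ite_mem, Finset.inter_eq_right.mpr (Finset.sdiff_subset),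
      Finset.mul_sum]
  constructor
  · by_cases h : a * ∑ v ∈ S, γ v ≤ b * ∑ v ∈ e \ S, γ v
    · refine ⟨S, hS.trans (Finset.subset_insert _ _), Finset.inter_eq_left.mpr hS, ?_⟩
      rw [keyA S huS (fun v _ => Iff.rfl), min_eq_left h]
    · refine ⟨insert u S, Finset.insert_subset_insert _ hS, ?_, ?_⟩
      · rw [Finset.insert_inter_of_notMem hu, Finset.inter_eq_left.mpr hS]
      · rw [keyB (insert u S) (Finset.mem_insert_self _ _) ?_, min_eq_right (le_of_not_ge h)]
        intro v hve
        simp only [Finset.mem_insert]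
        constructor
        · rintro (rfl | h) <;> [exact absurd hve hu; exact h]
        · exact Or.inr
  · rintro x ⟨T, hTsub, hTS, rfl⟩
    have hv : ∀ v ∈ e, (v ∈ T ↔ v ∈ S) := by
      intro v hve
      constructor
      · intro h; rw [← hTS]; exact Finset.mem_inter.mpr ⟨h, hve⟩
      · intro h; exact (Finset.mem_inter.mp (hTS ▸ h)).1
    by_cases huT : u ∈ T
    · rw [keyB T huT hv]; exact min_le_right _ _
    · rw [keyA T huT hv]; exact min_le_left _ _
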